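/- Let n ≥ 7 and let G and H be simple graphs on n vertices that share n−1 cards. If Δ(G) = n−1, then for every integer r with 1 ≤ r ≤ n−1 we have κ_r(G) = κ_r(H). -/

import Mathlib

open SimpleGraph

/-- `kappa G r` is the number of `r`-cliques of the graph `G`. -/
noncomputable def kappa {V : Type*} (G : SimpleGraph V) (r : ℕ) : ℕ :=
  (G.cliqueSet r).ncard

/-- `degR G r v` is the number of `r`-cliques of `G` that contain the vertex `v`. -/
noncomputable def degR {V : Type*} (G : SimpleGraph V) (r : ℕ) (v : V) : ℕ :=
  {s | s ∈ G.cliqueSet r ∧ v ∈ s}.ncard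

/-- `deg G v` is the degree of the vertex `v` in `G`. -/
noncomputable def deg {V : Type*} (G : SimpleGraph V) (v : V) : ℕ :=
  (G.neighborSet v).ncard

/-- `gcard G v` is the card `G - v`: the induced subgraph of `G` on `V(G) \ {v}`. -/
def gcard {V : Type*} (G : SimpleGraph V) (v : V) : SimpleGraph {x : V // x ≠ v} :=
  G.induce {x : V | x ≠ v}

/-- The maximum degree `Δ(G)`. -/
noncomputable def maxDeg {n : ℕ} (G : SimpleGraph (Fin n)) : ℕ :=
  Finset.univ.sup (fun v => deg G v)

/-- The minimum degree `δ(G)`. -/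
noncomputable def minDeg {n : ℕ} (G : SimpleGraph (Fin n)) : ℕ :=
  sInf (Set.range (fun v => deg G v))

/-- `ℓ(G)`: the number of vertices of maximum degree. -/
noncomputable def numMaxDeg {n : ℕ} (G : SimpleGraph (Fin n)) : ℕ :=
  (Finset.univ.filter (fun v => deg G v = maxDeg G)).card

/-- `G` and `H` share `n-1` cards via the vertices `u`, `w` and the bijection `π`:
for every `v ≠ u`, the card `G - v` is isomorphic to the card `H - π(v)`. -/
def ShareCardsVia {n : ℕ} (G H : SimpleGraph (Fin n)) (u w : Fin n)
    (π : {x : Fin n // x ≠ u} ≃ {y : Fin n // y ≠ w}) : Prop :=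
  ∀ v : {x : Fin n // x ≠ u}, Nonempty (gcard G v.1 ≃g gcard H (π v).1)

/-- `G` and `H` share `n-1` cards. -/
def ShareCards {n : ℕ} (G H : SimpleGraph (Fin n)) : Prop :=
  ∃ (u w : Fin n) (π : {x : Fin n // x ≠ u} ≃ {y : Fin n // y ≠ w}),
    ShareCardsVia G H u w π


open Finset

set_option linter.unusedSectionVars false


section Basic
variable {V : Type*} {W : Type*} [Fintype V] [DecidableEq V] [Fintype W] [DecidableEq W]
variable (K : SimpleGraph V) (L : SimpleGraph W)

lemma kappa_iso (e : K ≃g L) (r : ℕ) : kappa K r = kappa L r := by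
  classical
  have himg : (fun s : Finset V => s.map e.toEmbedding.toEmbedding) '' K.cliqueSet r
      = L.cliqueSet r := by
    ext t
    constructor
    · rintro ⟨s, hs, rfl⟩
      refine ⟨?_, by simpa using hs.2⟩
      intro a ha b hb hab
      simp only [Finset.coe_map, Set.mem_image, Finset.mem_coe] at ha hb
      obtain ⟨a', ha', rfl⟩ := ha
      obtain ⟨b', hb', rfl⟩ := hb
      have : a' ≠ b' := fun h => hab (by rw [h])
      simpa using e.map_adj_iff.2 (hs.1 ha' hb' this)
    · intro ht
      refine ⟨t.map e.symm.toEmbedding.toEmbedding, ⟨?_, by simpa using ht.2⟩, ?_⟩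
      · intro a ha b hb hab
        simp only [Finset.coe_map, Set.mem_image, Finset.mem_coe] at ha hb
        obtain ⟨a', ha', rfl⟩ := ha
        obtain ⟨b', hb', rfl⟩ := hb
        have hne : a' ≠ b' := fun h => hab (by rw [h])
        have := ht.1 ha' hb' hne
        simpa using e.symm.map_adj_iff.2 this
      · ext a
        simp
        exact Iff.of_eq (congrArg (· ∈ t) (e.apply_symm_apply a))
  rw [kappa, kappa, ← himg]
  exact (Set.ncard_image_of_injective _ (Finset.map_injective _)).symm

lemma ncard_avoid (v : V) (r : ℕ) :
    {s | s ∈ K.cliqueSet r ∧ v ∉ s}.ncard = kappa (gcard K v) r := by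
  classical
  have himg : (fun t : Finset {x : V // x ≠ v} => t.map (Function.Embedding.subtype _)) ''
      ((gcard K v).cliqueSet r) = {s | s ∈ K.cliqueSet r ∧ v ∉ s} := by
    ext s
    constructor
    · rintro ⟨t, ht, rfl⟩
      refine ⟨⟨?_, by simpa using ht.2⟩, ?_⟩
      · intro a ha b hb hab
        simp only [Finset.coe_map, Set.mem_image, Finset.mem_coe,
          Function.Embedding.coe_subtype] at ha hb
        obtain ⟨a', ha', rfl⟩ := ha
        obtain ⟨b', hb', rfl⟩ := hb
        have hne : a' ≠ b' := fun h => hab (by rw [h])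
        exact ht.1 ha' hb' hne
      · intro hmem
        obtain ⟨z, _, hzv⟩ := Finset.mem_map.1 hmem
        exact z.2 hzv
    · rintro ⟨hs, hvs⟩
      refine ⟨s.subtype (· ≠ v), ⟨?_, ?_⟩, ?_⟩
      · rintro ⟨a, ha⟩ haa ⟨b, hb⟩ hbb hab
        simp only [Finset.mem_coe, Finset.mem_subtype] at haa hbb
        have hne : a ≠ b := fun h => hab (by simp [h])
        exact hs.1 haa hbb hne
      · rw [Finset.card_subtype, Finset.filter_true_of_mem, hs.2]
        intro a ha h
        exact hvs (h ▸ ha)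
      · show (s.subtype (· ≠ v)).map _ = s
        rw [Finset.subtype_map, Finset.filter_true_of_mem]
        intro a ha h
        exact hvs (h ▸ ha)
  rw [kappa, ← himg]
  exact (Set.ncard_image_of_injective _ (Finset.map_injective _))

lemma kappa_split (v : V) (r : ℕ) :
    kappa K r = kappa (gcard K v) r + degR K r v := by
  classical
  rw [← ncard_avoid]
  rw [kappa, degR]
  rw [← Set.ncard_union_eq ?_ (Set.toFinite _) (Set.toFinite _)]
  · congr 1
    ext s
    by_cases h : v ∈ s <;> simp [h, and_comm]
  · rw [Set.disjoint_left]
    rintro s ⟨_, hv⟩ ⟨_, hv'⟩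
    exact hv hv'

end Basic


section Basic2
variable {V : Type*} [Fintype V] [DecidableEq V] (K : SimpleGraph V)

lemma degR_succ (x : V) (r : ℕ) :
    degR K (r+1) x = {t | t ∈ K.cliqueSet r ∧ x ∉ t ∧ ∀ z ∈ t, K.Adj x z}.ncard := by
  classical
  have himg : (fun s : Finset V => s.erase x) '' {s | s ∈ K.cliqueSet (r+1) ∧ x ∈ s}
      = {t | t ∈ K.cliqueSet r ∧ x ∉ t ∧ ∀ z ∈ t, K.Adj x z} := by
    ext t
    constructor
    · rintro ⟨s, ⟨hs, hxs⟩, rfl⟩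
      refine ⟨⟨fun a ha b hb hab => hs.1 (Finset.mem_of_mem_erase ha)
        (Finset.mem_of_mem_erase hb) hab, ?_⟩, Finset.notMem_erase _ _, ?_⟩
      · rw [Finset.card_erase_of_mem hxs, hs.2]
        omega
      · intro z hz
        exact (hs.1 hxs (Finset.mem_of_mem_erase hz)
          (Finset.ne_of_mem_erase hz).symm)
    · rintro ⟨ht, hxt, hadj⟩
      refine ⟨insert x t, ⟨⟨?_, ?_⟩, Finset.mem_insert_self _ _⟩, ?_⟩
      · rw [Finset.coe_insert]
        exact ht.1.insert fun b hb _ => hadj b hb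
      · rw [Finset.card_insert_of_notMem hxt, ht.2]
      · show (insert x t).erase x = t
        rw [Finset.erase_insert hxt]
  rw [degR, ← himg]
  refine (Set.ncard_image_of_injOn ?_).symm
  rintro s ⟨_, hxs⟩ s' ⟨_, hxs'⟩ h
  dsimp only at h
  rw [← Finset.insert_erase hxs, ← Finset.insert_erase hxs', h]

def IsUniv {V : Type*} (K : SimpleGraph V) (x : V) : Prop := ∀ y, y ≠ x → K.Adj x y

lemma degR_le_gcard (x : V) (r : ℕ) :
    degR K (r+1) x ≤ kappa (gcard K x) r := by
  classical
  rw [degR_succ, ← ncard_avoid]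
  exact Set.ncard_le_ncard (fun t ht => ⟨ht.1, ht.2.1⟩) (Set.toFinite _)

lemma degR_univ (x : V) (hx : IsUniv K x) (r : ℕ) :
    degR K (r+1) x = kappa (gcard K x) r := by
  classical
  rw [degR_succ, ← ncard_avoid]
  congr 1
  ext t
  refine ⟨fun ht => ⟨ht.1, ht.2.1⟩, fun ht => ⟨ht.1, ht.2, fun z hz => ?_⟩⟩
  exact hx z (fun h => ht.2 (h ▸ hz))

lemma kappa_zero : kappa K 0 = 1 := by
  classical
  have : K.cliqueSet 0 = {(∅ : Finset V)} := by
    ext s; simp [cliqueSet, isNClique_zero]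
  rw [kappa, this, Set.ncard_singleton]

lemma kappa_one : kappa K 1 = Fintype.card V := by
  classical
  rw [kappa, cliqueSet_one]
  have : Set.range (singleton : V → Finset V) = (singleton : V → Finset V) '' Set.univ := by
    rw [Set.image_univ]
  rw [this, Set.ncard_image_of_injective _ (fun a b h => by
    simpa using Finset.singleton_injective h), Set.ncard_univ, Nat.card_eq_fintype_card]

lemma degR_zero (v : V) : degR K 0 v = 0 := by
  classical
  rw [degR]
  convert Set.ncard_empty (Finset V)
  ext s
  simp only [Set.mem_setOf_eq, Set.mem_empty_iff_false, iff_false, not_and]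
  intro hs
  rw [(isNClique_zero.1 hs)]
  simp

lemma degR_two (v : V) : degR K 2 v = deg K v := by
  classical
  rw [show (2:ℕ) = 1 + 1 from rfl, degR_succ]
  have himg : (fun z : V => ({z} : Finset V)) '' (K.neighborSet v)
      = {t | t ∈ K.cliqueSet 1 ∧ v ∉ t ∧ ∀ z ∈ t, K.Adj v z} := by
    ext t
    constructor
    · rintro ⟨z, hz, rfl⟩
      exact ⟨by simp [cliqueSet, isNClique_one], by simpa using (K.ne_of_adj hz),
        by intro a ha; simp only [Finset.mem_singleton] at ha; exact ha ▸ hz⟩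
    · rintro ⟨ht, hvt, hadj⟩
      obtain ⟨a, rfl⟩ := isNClique_one.1 ht
      exact ⟨a, hadj a (Finset.mem_singleton_self a), rfl⟩
  rw [← himg, Set.ncard_image_of_injective _ (fun a b h => by simpa using h), deg]

lemma sum_degR (r : ℕ) : ∑ v, degR K r v = r * kappa K r := by
  classical
  set C : Finset (Finset V) := (Set.toFinite (K.cliqueSet r)).toFinset with hC
  have hdC : ∀ v, degR K r v = (C.filter (fun s => v ∈ s)).card := by
    intro v
    rw [degR]
    have : {s | s ∈ K.cliqueSet r ∧ v ∈ s} = ↑(C.filter (fun s => v ∈ s)) := by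
      ext s; simp [hC]
    rw [this, Set.ncard_coe_finset]
  have hkC : kappa K r = C.card := by
    rw [kappa, ← Set.ncard_coe_finset C]
    congr 1
    simp only [hC, Set.Finite.coe_toFinset]
  calc ∑ v, degR K r v = ∑ v, ∑ s ∈ C, (if v ∈ s then 1 else 0) := by
        simp_rw [hdC, Finset.card_filter]
    _ = ∑ s ∈ C, ∑ v, (if v ∈ s then 1 else 0) := Finset.sum_comm
    _ = ∑ s ∈ C, s.card := by
        refine Finset.sum_congr rfl fun s _ => ?_
        rw [Finset.sum_ite_mem, Finset.univ_inter, Finset.card_eq_sum_ones]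
    _ = ∑ _s ∈ C, r := by
        refine Finset.sum_congr rfl fun s hs => ?_
        have : s ∈ K.cliqueSet r := by simpa [hC] using hs
        exact this.2
    _ = r * kappa K r := by rw [Finset.sum_const, hkC, smul_eq_mul, mul_comm]

end Basic2


def nonNbrs {V : Type*} (K : SimpleGraph V) (z : V) : Set V := {q | q ≠ z ∧ ¬ K.Adj z q}
def univSet {V : Type*} (K : SimpleGraph V) : Set V := {x | IsUniv K x}
/-- vertices `z ≠ v` that are universal in the card `G - v`. -/
def UC {V : Type*} (K : SimpleGraph V) (v : V) : Set V := {z | z ≠ v ∧ nonNbrs K z ⊆ {v}}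
/-- vertices whose unique non-neighbor is `q`. -/
def MS {V : Type*} (K : SimpleGraph V) (q : V) : Set V := {z | nonNbrs K z = {q}}

section Deg
variable {V : Type*} {W : Type*} [Fintype V] [DecidableEq V] [Fintype W] [DecidableEq W]
variable (K : SimpleGraph V) (L : SimpleGraph W)

lemma deg_add_nonNbrs (z : V) : deg K z + (nonNbrs K z).ncard = Fintype.card V - 1 := by
  classical
  have hU : K.neighborSet z ∪ nonNbrs K z = {z}ᶜ := by
    ext q
    by_cases hq : q = z
    · subst hq; simp [nonNbrs, SimpleGraph.irrefl]
    · simp only [Set.mem_union, mem_neighborSet, nonNbrs, Set.mem_setOf_eq,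
        Set.mem_compl_iff, Set.mem_singleton_iff, hq]
      tauto
  have hd : Disjoint (K.neighborSet z) (nonNbrs K z) := by
    rw [Set.disjoint_left]
    rintro q hq ⟨_, hnq⟩
    exact hnq hq
  rw [deg, ← Set.ncard_union_eq hd (Set.toFinite _) (Set.toFinite _), hU]
  have h1 := Set.ncard_add_ncard_compl ({z} : Set V) (Set.toFinite _) (Set.toFinite _)
  rw [Set.ncard_singleton] at h1
  rw [Nat.card_eq_fintype_card] at h1
  omega

lemma deg_le (z : V) : deg K z ≤ Fintype.card V - 1 := by
  have := deg_add_nonNbrs K z; omega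

lemma isUniv_iff_deg (z : V) : IsUniv K z ↔ deg K z = Fintype.card V - 1 := by
  classical
  have h := deg_add_nonNbrs K z
  constructor
  · intro hz
    have : nonNbrs K z = ∅ := by
      ext q; simp only [nonNbrs, Set.mem_setOf_eq, Set.mem_empty_iff_false, iff_false, not_and,
        not_not]
      intro hq; exact hz q hq
    rw [this, Set.ncard_empty] at h; omega
  · intro hz
    have hnn : (nonNbrs K z).ncard = 0 := by omega
    have : nonNbrs K z = ∅ := by
      rw [← Set.ncard_eq_zero (Set.toFinite _)] at *; exact hnn
    intro q hq
    by_contra hadj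
    have : q ∈ nonNbrs K z := ⟨hq, hadj⟩
    simp [‹nonNbrs K z = ∅›] at this
  
lemma deg_iso (e : K ≃g L) (z : V) : deg L (e z) = deg K z := by
  rw [deg, deg, ← Nat.card_coe_set_eq, ← Nat.card_coe_set_eq]
  exact (Nat.card_congr (e.mapNeighborSet z).symm)

lemma univSet_iso (e : K ≃g L) : (univSet L).ncard = (univSet K).ncard := by
  classical
  have himg : (⇑e) '' univSet K = univSet L := by
    ext y
    constructor
    · rintro ⟨x, hx, rfl⟩
      intro q hq
      have hq' : e.symm q ≠ x := by
        intro h; apply hq; rw [← h]; simp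
      have := hx (e.symm q) hq'
      have h2 := e.map_adj_iff.2 this
      simpa using h2
    · intro hy
      refine ⟨e.symm y, ?_, by simp⟩
      intro q hq
      have hq' : e q ≠ y := by
        intro h; apply hq; rw [← h]; simp
      have := hy (e q) hq'
      have h2 : K.Adj (e.symm y) (e.symm (e q)) := e.symm.map_adj_iff.2 this
      simpa using h2
      
  rw [← himg, Set.ncard_image_of_injective _ e.injective]

lemma UC_eq_image (v : V) : UC K v = Subtype.val '' univSet (gcard K v) := by
  ext z
  constructor
  · rintro ⟨hzv, hsub⟩
    refine ⟨⟨z, hzv⟩, ?_, rfl⟩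
    rintro ⟨q, hqv⟩ hq
    have hqz : q ≠ z := fun h => hq (by simp [Subtype.ext_iff, h])
    show K.Adj z q
    by_contra hadj
    have : q ∈ nonNbrs K z := ⟨hqz, hadj⟩
    exact hqv (hsub this)
  · rintro ⟨⟨z, hzv⟩, hz, rfl⟩
    refine ⟨hzv, ?_⟩
    rintro q ⟨hqz, hnadj⟩
    by_contra hqv
    have : (⟨q, hqv⟩ : {x : V // x ≠ v}) ≠ ⟨z, hzv⟩ := by
      simp [Subtype.ext_iff, hqz]
    exact hnadj (hz _ this)

lemma UC_ncard_iso (v : V) (q : W) (e : gcard K v ≃g gcard L q) :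
    (UC K v).ncard = (UC L q).ncard := by
  rw [UC_eq_image, UC_eq_image, Set.ncard_image_of_injective _ Subtype.val_injective,
    Set.ncard_image_of_injective _ Subtype.val_injective]
  exact (univSet_iso _ _ e).symm

lemma UC_decomp (v : V) : (UC K v).ncard = (univSet K \ {v}).ncard + (MS K v).ncard := by
  classical
  have hunion : UC K v = (univSet K \ {v}) ∪ MS K v := by
    ext z
    constructor
    · rintro ⟨hzv, hsub⟩
      rcases Set.eq_empty_or_nonempty (nonNbrs K z) with he | hne
      · left
        refine ⟨?_, hzv⟩
        intro p hp
        by_contra hadj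
        have : p ∈ nonNbrs K z := ⟨hp, hadj⟩
        simp [he] at this
      · right
        exact (hne.subset_singleton_iff).1 hsub
    · rintro (⟨hz, hzv⟩ | hz)
      · exact ⟨hzv, by
          intro p hp
          exact absurd (hz p hp.1) hp.2⟩
      · have hvz : v ≠ z ∧ ¬ K.Adj z v := by
          have : v ∈ nonNbrs K z := by rw [hz]; rfl
          exact this
        exact ⟨fun h => hvz.1 h.symm, by rw [hz]⟩
  have hdisj : Disjoint (univSet K \ {v}) (MS K v) := by
    rw [Set.disjoint_left]
    rintro z ⟨hz, hzv⟩ hms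
    have : v ∈ nonNbrs K z := by rw [hms]; rfl
    exact this.2 (hz v fun h => this.1 h)
  rw [hunion, Set.ncard_union_eq hdisj (Set.toFinite _) (Set.toFinite _)]

lemma MS_deg {q z : V} (h : z ∈ MS K q) : deg K z = Fintype.card V - 2 := by
  have h2 := deg_add_nonNbrs K z
  have : (nonNbrs K z).ncard = 1 := by
    rw [show nonNbrs K z = {q} from h, Set.ncard_singleton]
  have h4 : 0 < Fintype.card V := Fintype.card_pos_iff.2 ⟨z⟩
  omega

lemma card_fintype_ne (v : V) : Fintype.card {x : V // x ≠ v} = Fintype.card V - 1 := by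
  classical
  simp [Fintype.card_subtype_compl]

lemma cardDeg_eq (v : V) (z : V) (hz : z ≠ v) :
    deg (gcard K v) ⟨z, hz⟩ = (K.neighborSet z \ {v}).ncard := by
  classical
  rw [deg, ← Set.ncard_image_of_injective _ (Subtype.val_injective
    (p := fun x : V => x ≠ v))]
  congr 1
  ext q
  constructor
  · rintro ⟨⟨q, hqv⟩, hq, rfl⟩
    exact ⟨hq, hqv⟩
  · rintro ⟨hq, hqv⟩
    exact ⟨⟨q, hqv⟩, hq, rfl⟩

end Deg


section Top
variable {W : Type*} [Fintype W] [DecidableEq W]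

lemma kappa_top_eq_ite (L : SimpleGraph W) (hW : 2 ≤ Fintype.card W) :
    kappa L (Fintype.card W) = if kappa L 2 = (Fintype.card W).choose 2 then 1 else 0 := by
  classical
  have hsub : L.cliqueSet (Fintype.card W) ⊆ {(Finset.univ : Finset W)} := by
    intro s hs
    exact Finset.eq_univ_of_card s hs.2
  by_cases hc : (Finset.univ : Finset W) ∈ L.cliqueSet (Fintype.card W)
  · have hset : L.cliqueSet (Fintype.card W) = {(Finset.univ : Finset W)} :=
      Set.Subset.antisymm hsub (by simpa using hc)
    have h2 : L.cliqueSet 2 = ↑(Finset.powersetCard 2 (Finset.univ : Finset W)) := by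
      ext s
      rw [Finset.mem_coe, Finset.mem_powersetCard]
      constructor
      · intro hs; exact ⟨Finset.subset_univ s, hs.2⟩
      · rintro ⟨-, hcard⟩
        refine ⟨?_, hcard⟩
        intro p _ q _ hpq
        exact hc.1 (Finset.mem_univ p) (Finset.mem_univ q) hpq
    have hk2 : kappa L 2 = (Fintype.card W).choose 2 := by
      rw [kappa, h2, Set.ncard_coe_finset, Finset.card_powersetCard, Finset.card_univ]
    rw [kappa, hset, Set.ncard_singleton, if_pos hk2]
  · have hset : L.cliqueSet (Fintype.card W) = ∅ := by
      ext s
      simp only [Set.mem_empty_iff_false, iff_false]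
      intro hs
      exact hc ((hsub hs) ▸ hs)
    have hk2 : kappa L 2 ≠ (Fintype.card W).choose 2 := by
      intro hk2
      apply hc
      have hCsub : (Set.toFinite (L.cliqueSet 2)).toFinset ⊆
          Finset.powersetCard 2 (Finset.univ : Finset W) := by
        intro s hs
        rw [Set.Finite.mem_toFinset] at hs
        exact Finset.mem_powersetCard.2 ⟨Finset.subset_univ s, hs.2⟩
      have hcards : (Finset.powersetCard 2 (Finset.univ : Finset W)).card ≤
          (Set.toFinite (L.cliqueSet 2)).toFinset.card := by
        rw [kappa, Set.ncard_eq_toFinset_card (L.cliqueSet 2) (Set.toFinite _)] at hk2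
        rw [Finset.card_powersetCard, Finset.card_univ, ← hk2]
      have heq := Finset.eq_of_subset_of_card_le hCsub hcards
      have hall : ∀ a b : W, a ≠ b → L.Adj a b := by
        intro a b hab
        have hmem : ({a, b} : Finset W) ∈ Finset.powersetCard 2 (Finset.univ : Finset W) := by
          rw [Finset.mem_powersetCard]
          exact ⟨Finset.subset_univ _, Finset.card_pair hab⟩
        rw [← heq, Set.Finite.mem_toFinset] at hmem
        exact hmem.1 (by simp) (by simp) hab
      exact ⟨fun a _ b _ hab => hall a b hab, Finset.card_univ⟩
    rw [kappa, hset, Set.ncard_empty, if_neg hk2]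

lemma sum_ne {M : Type*} [AddCommMonoid M] (u : W) (f : W → M) :
    f u + ∑ v : {x : W // x ≠ u}, f v.1 = ∑ x, f x := by
  classical
  have h1 : ∑ v : {x : W // x ≠ u}, f v.1 = ∑ x ∈ Finset.univ.erase u, f x := by
    rw [Finset.sum_subtype (Finset.univ.erase u)
      (fun x => ⟨fun h => (Finset.mem_erase.1 h).1,
        fun h => Finset.mem_erase.2 ⟨h, Finset.mem_univ x⟩⟩) f]
  rw [h1, Finset.add_sum_erase _ f (Finset.mem_univ u)]

end Top

section Main
variable {n : ℕ}

lemma shareSymm (G H : SimpleGraph (Fin n)) (u w : Fin n)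
    (π : {x : Fin n // x ≠ u} ≃ {y : Fin n // y ≠ w}) (hπ : ShareCardsVia G H u w π) :
    ShareCardsVia H G w u π.symm := by
  intro q
  have h := hπ (π.symm q)
  rw [Equiv.apply_symm_apply] at h
  exact ⟨h.some.symm⟩

lemma caseBoth (hn : 7 ≤ n) (G H : SimpleGraph (Fin n)) (u w : Fin n)
    (π : {x : Fin n // x ≠ u} ≃ {y : Fin n // y ≠ w}) (hπ : ShareCardsVia G H u w π)
    (hu : IsUniv G u) (hw : IsUniv H w) :
    ∀ r : ℕ, r ≤ n - 1 → kappa G r = kappa H r := by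
  have hcards : Fintype.card (Fin n) = n := Fintype.card_fin n
  have hcard_sub : ∀ v : Fin n, Fintype.card {x : Fin n // x ≠ v} = n - 1 := by
    intro v; rw [card_fintype_ne, hcards]
  -- Step 1: all r ≤ n-2, with the degR counterpart
  have key : ∀ r : ℕ, r ≤ n - 2 → kappa G r = kappa H r ∧ degR G r u = degR H r w := by
    intro r
    induction r with
    | zero => exact fun _ => ⟨by rw [kappa_zero, kappa_zero], by rw [degR_zero, degR_zero]⟩
    | succ r ih =>
      intro hr
      obtain ⟨hk, hd⟩ := ih (by omega)
      have hsplitG := kappa_split G u r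
      have hsplitH := kappa_split H w r
      have hdG := degR_univ G u hu r
      have hdH := degR_univ H w hw r
      have hdeq : degR G (r+1) u = degR H (r+1) w := by omega
      refine ⟨?_, hdeq⟩
      have hsum : ∑ v : {x : Fin n // x ≠ u}, kappa (gcard G v.1) (r+1)
          = ∑ q : {y : Fin n // y ≠ w}, kappa (gcard H q.1) (r+1) :=
        Fintype.sum_equiv π _ _ (fun v => kappa_iso _ _ (hπ v).some (r+1))
      have hEG : ∑ v : {x : Fin n // x ≠ u}, kappa (gcard G v.1) (r+1)
          + ∑ v : {x : Fin n // x ≠ u}, degR G (r+1) v.1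
          = (n-1) * kappa G (r+1) := by
        rw [← Finset.sum_add_distrib]
        rw [Finset.sum_congr rfl (fun v _ => (kappa_split G v.1 (r+1)).symm)]
        rw [Finset.sum_const, Finset.card_univ, hcard_sub u, smul_eq_mul]
      have hEH : ∑ q : {y : Fin n // y ≠ w}, kappa (gcard H q.1) (r+1)
          + ∑ q : {y : Fin n // y ≠ w}, degR H (r+1) q.1
          = (n-1) * kappa H (r+1) := by
        rw [← Finset.sum_add_distrib]
        rw [Finset.sum_congr rfl (fun q _ => (kappa_split H q.1 (r+1)).symm)]
        rw [Finset.sum_const, Finset.card_univ, hcard_sub w, smul_eq_mul]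
      have hDG : degR G (r+1) u + ∑ v : {x : Fin n // x ≠ u}, degR G (r+1) v.1
          = (r+1) * kappa G (r+1) := by
        rw [sum_ne u (degR G (r+1))]; exact sum_degR G (r+1)
      have hDH : degR H (r+1) w + ∑ q : {y : Fin n // y ≠ w}, degR H (r+1) q.1
          = (r+1) * kappa H (r+1) := by
        rw [sum_ne w (degR H (r+1))]; exact sum_degR H (r+1)
      -- combine over ℤ
      set a := kappa G (r+1) with ha
      set b := kappa H (r+1) with hb
      set SG := ∑ v : {x : Fin n // x ≠ u}, kappa (gcard G v.1) (r+1) with hSG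
      set TG := ∑ v : {x : Fin n // x ≠ u}, degR G (r+1) v.1 with hTG
      set SH := ∑ q : {y : Fin n // y ≠ w}, kappa (gcard H q.1) (r+1) with hSH
      set TH := ∑ q : {y : Fin n // y ≠ w}, degR H (r+1) q.1 with hTH
      have h1n : 1 ≤ n := by omega
      have h2n : 2 ≤ n := by omega
      zify [h1n] at hEG hEH hDG hDH
      zify at hsum hdeq
      zify [h2n] at hr
      have hfac : (((n:ℤ)-1) - ((r:ℤ)+1)) * ((a:ℤ) - (b:ℤ)) = 0 := by
        ring_nf
        ring_nf at hEG hEH hDG hDH hdeq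
        linarith
      have hne : (((n:ℤ)-1) - ((r:ℤ)+1)) ≠ 0 := by omega
      have hab : (a:ℤ) = b := by
        rcases mul_eq_zero.1 hfac with h | h
        · exact absurd h hne
        · linarith
      exact_mod_cast hab
  -- Step 2: r = n-1
  intro r hr
  rcases Nat.lt_or_ge r (n-1) with hlt | hge
  · exact (key r (by omega)).1
  · have hrn : r = n - 1 := by omega
    subst hrn
    obtain ⟨hk2, hd2⟩ := key 2 (by omega)
    obtain ⟨hkn2, hdn2⟩ := key (n-2) (by omega)
    -- degR at top level
    have hsplitG := kappa_split G u (n-1)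
    have hsplitH := kappa_split H w (n-1)
    have hdG : degR G (n-1) u = kappa (gcard G u) (n-2) := by
      have := degR_univ G u hu (n-2)
      rwa [show n - 2 + 1 = n - 1 by omega] at this
    have hdH : degR H (n-1) w = kappa (gcard H w) (n-2) := by
      have := degR_univ H w hw (n-2)
      rwa [show n - 2 + 1 = n - 1 by omega] at this
    have hgc2 : kappa (gcard G u) (n-2) = kappa (gcard H w) (n-2) := by
      have h1 := kappa_split G u (n-2)
      have h2 := kappa_split H w (n-2)
      omega
    -- kappa of gcard at full size via completeness
    have hg2 : kappa (gcard G u) 2 = kappa (gcard H w) 2 := by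
      have h1 := kappa_split G u 2
      have h2 := kappa_split H w 2
      omega
    have htopG := kappa_top_eq_ite (gcard G u) (by rw [hcard_sub u]; omega)
    have htopH := kappa_top_eq_ite (gcard H w) (by rw [hcard_sub w]; omega)
    rw [hcard_sub u] at htopG
    rw [hcard_sub w] at htopH
    have htop : kappa (gcard G u) (n-1) = kappa (gcard H w) (n-1) := by
      rw [htopG, htopH, hg2]
    omega

lemma mainLemma (hn : 7 ≤ n) (G H : SimpleGraph (Fin n)) (u w : Fin n)
    (π : {x : Fin n // x ≠ u} ≃ {y : Fin n // y ≠ w}) (hπ : ShareCardsVia G H u w π)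
    (x : Fin n) (hxu : x ≠ u) (hx : IsUniv G x) :
    ∀ r : ℕ, 1 ≤ r → r ≤ n - 1 → kappa G r = kappa H r := by
  have hcards : Fintype.card (Fin n) = n := Fintype.card_fin n
  have hcard_sub : ∀ v : Fin n, Fintype.card {p : Fin n // p ≠ v} = n - 1 := by
    intro v; rw [card_fintype_ne, hcards]
  set x' : {p : Fin n // p ≠ u} := ⟨x, hxu⟩ with hx'
  set y : Fin n := (π x').1 with hy
  have hyw : y ≠ w := (π x').2
  have perv : ∀ (v : {p : Fin n // p ≠ u}) (r : ℕ),
      kappa G r + degR H r (π v).1 = kappa H r + degR G r v.1 := by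
    intro v r
    have h1 := kappa_split G v.1 r
    have h2 := kappa_split H (π v).1 r
    have h3 : kappa (gcard G v.1) r = kappa (gcard H (π v).1) r := kappa_iso _ _ (hπ v).some r
    omega
  have key : ∀ r : ℕ, kappa G (r+1) + degR H (r+1) y = kappa H (r+1) + kappa (gcard H y) r := by
    intro r
    have h1 := perv x' (r+1)
    rw [← hy] at h1
    have hx'val : (x' : Fin n) = x := rfl
    rw [hx'val] at h1
    have h2 := degR_univ G x hx r
    have h3 : kappa (gcard G x) r = kappa (gcard H y) r := kappa_iso _ _ (hπ x').some r
    omega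
  by_cases hyuniv : IsUniv H y
  · intro r hr1 hrn
    obtain ⟨r', rfl⟩ : ∃ r', r = r'+1 := ⟨r-1, by omega⟩
    have h1 := key r'
    have h2 := degR_univ H y hyuniv r'
    omega
  · exfalso
    have hdyle : deg H y ≤ n - 2 := by
      have hle := deg_le H y
      rw [hcards] at hle
      have : deg H y ≠ n - 1 := fun h => hyuniv ((isUniv_iff_deg H y).2 (by rw [hcards]; exact h))
      omega
    have hE2 : kappa G 2 + deg H y = kappa H 2 + (n-1) := by
      have h1 := key 1
      rw [degR_two, kappa_one, hcard_sub y] at h1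
      exact h1
    set m := n - 1 - deg H y with hm
    have hm1 : 1 ≤ m := by omega
    have hk2 : kappa G 2 = kappa H 2 + m := by omega
    have perv2 : ∀ v : {p : Fin n // p ≠ u}, deg G v.1 = deg H (π v).1 + m := by
      intro v
      have h := perv v 2
      rw [degR_two, degR_two] at h
      omega
    -- degree sums
    have hSG := sum_ne u (deg G)
    have hSH := sum_ne w (deg H)
    have hhandG : ∑ p, deg G p = 2 * kappa G 2 := by
      rw [Finset.sum_congr rfl fun p _ => (degR_two G p).symm]
      exact sum_degR G 2
    have hhandH : ∑ p, deg H p = 2 * kappa H 2 := by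
      rw [Finset.sum_congr rfl fun p _ => (degR_two H p).symm]
      exact sum_degR H 2
    have hreidx : ∑ v : {p : Fin n // p ≠ u}, deg H (π v).1
        = ∑ q : {q : Fin n // q ≠ w}, deg H q.1 :=
      Fintype.sum_equiv π _ _ (fun v => rfl)
    have hsum' : ∑ v : {p : Fin n // p ≠ u}, deg G v.1
        = ∑ q : {q : Fin n // q ≠ w}, deg H q.1 + (n-1) * m := by
      rw [Finset.sum_congr rfl fun v _ => perv2 v, Finset.sum_add_distrib,
        Finset.sum_const, Finset.card_univ, hcard_sub u, smul_eq_mul, hreidx]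
    have hA1 : 1 ≤ deg G u := by
      have hne : (G.neighborSet u).Nonempty := ⟨x, (hx u (Ne.symm hxu)).symm⟩
      have := (Set.ncard_pos (Set.toFinite _)).2 hne
      exact this
    have hBle : deg H w ≤ n - 1 := by
      have := deg_le H w; rwa [hcards] at this
    -- B = A + (n-3) m over ℤ, then m = 1 and A ≤ 2
    have hmain : (deg H w : ℤ) = (deg G u : ℤ) + ((n:ℤ) - 3) * m := by
      set SG' := ∑ v : {p : Fin n // p ≠ u}, deg G v.1
      set SH' := ∑ q : {q : Fin n // q ≠ w}, deg H q.1
      have h1n : 1 ≤ n := by omega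
      zify [h1n] at hSG hSH hhandG hhandH hsum' hk2
      ring_nf
      ring_nf at hSG hSH hhandG hhandH hsum' hk2
      linarith
    have hmle : m = 1 := by
      by_contra hm2'
      have hm2 : 2 ≤ m := by omega
      have h1 : ((n:ℤ) - 3) * 2 ≤ ((n:ℤ) - 3) * m := by
        apply mul_le_mul_of_nonneg_left
        · exact_mod_cast hm2
        · have : (7:ℤ) ≤ n := by exact_mod_cast hn
          linarith
      have h2 : ((deg H w : ℕ) : ℤ) ≤ (n:ℤ) - 1 := by
        have h2n : 1 ≤ n := by omega
        zify [h2n] at hBle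
        exact hBle
      have h3 : (1:ℤ) ≤ (deg G u : ℤ) := by exact_mod_cast hA1
      have h4 : (7:ℤ) ≤ n := by exact_mod_cast hn
      linarith
    rw [hmle] at hmain
    push_cast at hmain
    ring_nf at hmain
    have hAle2 : deg G u ≤ 2 := by
      have h2 : ((deg H w : ℕ) : ℤ) ≤ (n:ℤ) - 1 := by
        have h2n : 1 ≤ n := by omega
        zify [h2n] at hBle
        exact hBle
      have h4 : (7:ℤ) ≤ n := by exact_mod_cast hn
      have : (deg G u : ℤ) ≤ 2 := by linarith
      exact_mod_cast this
    -- universal vertices of G are neighbors of u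
    have hUGnu : ∀ z ∈ univSet G, z ≠ u := by
      intro z hz hzu
      have : deg G z = n - 1 := by
        have := (isUniv_iff_deg G z).1 hz; rwa [hcards] at this
      rw [hzu] at this
      omega
    have hk_le_A : (univSet G).ncard ≤ deg G u := by
      rw [deg]
      refine Set.ncard_le_ncard ?_ (Set.toFinite _)
      intro z hz
      exact (hz u (Ne.symm (hUGnu z hz))).symm
    -- images of non-w vertices
    have hdegH_img : ∀ q : {q : Fin n // q ≠ w}, deg G (π.symm q).1 = deg H q.1 + m := by
      intro q
      have h := perv2 (π.symm q)
      rwa [Equiv.apply_symm_apply] at h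
    -- bound on the set of degree-(n-2) vertices of H
    have hAH : ({z : Fin n | deg H z = n - 2}).ncard ≤ (univSet G).ncard + 1 := by
      have h1 := Set.ncard_le_ncard_diff_add_ncard {z : Fin n | deg H z = n - 2}
        {w} (Set.toFinite _)
      rw [Set.ncard_singleton] at h1
      refine le_trans h1 (Nat.add_le_add_right ?_ 1)
      refine Set.ncard_le_ncard_of_injOn
        (fun z => if h : z ≠ w then (π.symm ⟨z, h⟩).1 else z) ?_ ?_ (Set.toFinite _)
      · rintro z ⟨hzd, hzw⟩
        simp only [Set.mem_singleton_iff] at hzw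
        simp only [Set.mem_setOf_eq] at hzd
        rw [dif_pos (show z ≠ w from hzw)]
        have h := hdegH_img ⟨z, hzw⟩
        rw [hmle, hzd] at h
        show IsUniv G _
        rw [isUniv_iff_deg, hcards]
        omega
      · rintro z1 ⟨_, hz1⟩ z2 ⟨_, hz2⟩ he
        simp only [Set.mem_singleton_iff] at hz1 hz2
        dsimp only at he
        rw [dif_pos (show z1 ≠ w from hz1), dif_pos (show z2 ≠ w from hz2)] at he
        have : (π.symm ⟨z1, hz1⟩) = (π.symm ⟨z2, hz2⟩) := Subtype.ext he
        have := π.symm.injective this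
        exact congrArg Subtype.val this
    -- the counting machine
    haveI : Nonempty (Fin n) := ⟨u⟩
    have hcount : (∀ v : {p : Fin n // p ≠ u}, ¬ IsUniv G v.1 → (MS H (π v).1).Nonempty) →
        n - 1 - (univSet G).ncard ≤ ({z : Fin n | deg H z = n - 2}).ncard := by
      intro hMS
      have hscard : ({v : {p : Fin n // p ≠ u} | ¬ IsUniv G v.1}).ncard
          = n - 1 - (univSet G).ncard := by
        have hcompl := Set.ncard_add_ncard_compl
          ({v : {p : Fin n // p ≠ u} | IsUniv G v.1}) (Set.toFinite _) (Set.toFinite _)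
        rw [Nat.card_eq_fintype_card, hcard_sub u] at hcompl
        have himg : Subtype.val '' {v : {p : Fin n // p ≠ u} | IsUniv G v.1} = univSet G := by
          ext z
          constructor
          · rintro ⟨⟨z, hz⟩, hz2, rfl⟩; exact hz2
          · intro hz; exact ⟨⟨z, hUGnu z hz⟩, hz, rfl⟩
        have hn1 : ({v : {p : Fin n // p ≠ u} | IsUniv G v.1}).ncard = (univSet G).ncard := by
          rw [← himg, Set.ncard_image_of_injective _ Subtype.val_injective]
        have : {v : {p : Fin n // p ≠ u} | ¬ IsUniv G v.1}
            = ({v : {p : Fin n // p ≠ u} | IsUniv G v.1})ᶜ := rfl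
        rw [this]
        omega
      rw [← hscard]
      refine Set.ncard_le_ncard_of_injOn
        (fun v => Classical.epsilon (· ∈ MS H (π v).1)) ?_ ?_ (Set.toFinite _)
      · intro v hv
        have hspec : Classical.epsilon (· ∈ MS H (π v).1) ∈ MS H (π v).1 :=
          Classical.epsilon_spec (p := (· ∈ MS H (π v).1)) (hMS v hv)
        have := MS_deg H hspec
        rwa [hcards] at this
      · intro v1 hv1 v2 hv2 he
        have h1 : nonNbrs H (Classical.epsilon (· ∈ MS H (π v1).1)) = {(π v1).1} :=
          Classical.epsilon_spec (p := (· ∈ MS H (π v1).1)) (hMS v1 hv1)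
        have h2 : nonNbrs H (Classical.epsilon (· ∈ MS H (π v2).1)) = {(π v2).1} :=
          Classical.epsilon_spec (p := (· ∈ MS H (π v2).1)) (hMS v2 hv2)
        dsimp only at he
        rw [he] at h1
        have h3 : ({(π v1).1} : Set (Fin n)) = {(π v2).1} := by rw [← h1, h2]
        exact π.injective (Subtype.ext (Set.singleton_eq_singleton_iff.1 h3))
    have hUCiso : ∀ v : {p : Fin n // p ≠ u}, (UC G v.1).ncard = (UC H (π v).1).ncard :=
      fun v => UC_ncard_iso _ _ _ _ (hπ v).some
    -- case split on deg G u
    have hucx : ∀ z ∈ univSet G, ∀ v : Fin n, ¬ IsUniv G v → z ∈ UC G v := by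
      intro z hz v hv
      refine ⟨fun h => hv (h ▸ hz), ?_⟩
      rintro q ⟨hq, hnadj⟩
      exact absurd (hz q hq) hnadj
    rcases (by omega : deg G u = 1 ∨ deg G u = 2) with hA | hA
    · -- deg G u = 1, deg H w = n-2, no universal vertices in H
      have hB : deg H w = n - 2 := by omega
      have hUnivH : univSet H = ∅ := by
        ext z
        simp only [Set.mem_empty_iff_false, iff_false]
        intro hz
        have hdz : deg H z = n - 1 := by
          have := (isUniv_iff_deg H z).1 hz; rwa [hcards] at this
        by_cases hzw : z = w
        · rw [hzw] at hdz; omega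
        · have h := hdegH_img ⟨z, hzw⟩
          rw [hmle, hdz] at h
          have := deg_le G (π.symm ⟨z, hzw⟩).1
          rw [hcards] at this
          omega
      have hMS : ∀ v : {p : Fin n // p ≠ u}, ¬ IsUniv G v.1 → (MS H (π v).1).Nonempty := by
        intro v hv
        have h1 : 1 ≤ (UC G v.1).ncard := by
          rw [Nat.one_le_iff_ne_zero, Ne, Set.ncard_eq_zero (Set.toFinite _)]
          intro hemp
          have := hucx x (by exact hx) v.1 hv
          rw [hemp] at this
          exact this
        have h2 := hUCiso v
        have h3 := UC_decomp H (π v).1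
        rw [hUnivH] at h3
        simp only [Set.empty_diff, Set.ncard_empty, zero_add] at h3
        rw [← Set.ncard_pos (Set.toFinite _)]
        omega
      have := hcount hMS
      have hkA := hk_le_A
      rw [hA] at hkA
      omega
    · -- deg G u = 2, w universal in H
      have hB : deg H w = n - 1 := by omega
      have hwuniv : IsUniv H w := (isUniv_iff_deg H w).2 (by rw [hcards]; exact hB)
      -- no other universal vertex of H
      have honly : ∀ z, IsUniv H z → z = w := by
        intro z hz
        by_contra hzw
        have hdz : deg H z = n - 1 := by
          have := (isUniv_iff_deg H z).1 hz; rwa [hcards] at this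
        have h := hdegH_img ⟨z, hzw⟩
        rw [hmle, hdz] at h
        have := deg_le G (π.symm ⟨z, hzw⟩).1
        rw [hcards] at this
        omega
      have hUnivH : univSet H = {w} := by
        ext z
        constructor
        · intro hz; exact honly z hz
        · rintro rfl; exact hwuniv
      have hkA := hk_le_A
      rw [hA] at hkA
      have hk1 : 1 ≤ (univSet G).ncard := by
        rw [Nat.one_le_iff_ne_zero, Ne, Set.ncard_eq_zero (Set.toFinite _)]
        intro hemp
        have : x ∈ univSet G := hx
        rw [hemp] at this
        exact this
      rcases (by omega : (univSet G).ncard = 1 ∨ (univSet G).ncard = 2) with hk | hk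
      · -- univSet G = {x} : contradiction via UC G x = ∅ but w ∈ UC H y
        obtain ⟨a, hst⟩ := Set.ncard_eq_one.1 hk
        have hax : a = x := by
          have : x ∈ univSet G := hx
          rw [hst] at this
          exact (this).symm
        rw [hax] at hst
        have hUCGx : UC G x = ∅ := by
          ext z
          simp only [Set.mem_empty_iff_false, iff_false]
          rintro ⟨hzx, hsub⟩
          have hxz : x ∉ nonNbrs G z := by
            rintro ⟨_, hnadj⟩
            exact hnadj (hx z hzx).symm
          have : nonNbrs G z = ∅ := by
            ext q
            simp only [Set.mem_empty_iff_false, iff_false]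
            intro hq
            exact hxz ((hsub hq) ▸ hq)
          have hzuniv : IsUniv G z := by
            intro q hq
            by_contra hnadj
            have : q ∈ nonNbrs G z := ⟨hq, hnadj⟩
            rw [‹nonNbrs G z = ∅›] at this
            exact this
          have : z ∈ univSet G := hzuniv
          rw [hst] at this
          exact hzx this
        have h1 := hUCiso x'
        rw [show (x' : Fin n) = x from rfl, ← hy] at h1
        rw [hUCGx, Set.ncard_empty] at h1
        have hwUC : w ∈ UC H y := by
          refine ⟨Ne.symm hyw, ?_⟩
          rintro q ⟨hq, hnadj⟩
          exact absurd (hwuniv q hq) hnadj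
        have : 1 ≤ (UC H y).ncard := by
          rw [Nat.one_le_iff_ne_zero, Ne, Set.ncard_eq_zero (Set.toFinite _)]
          intro hemp
          rw [hemp] at hwUC
          exact hwUC
        omega
      · -- k = 2
        have hMS : ∀ v : {p : Fin n // p ≠ u}, ¬ IsUniv G v.1 → (MS H (π v).1).Nonempty := by
          intro v hv
          have hsub : univSet G ⊆ UC G v.1 := fun z hz => hucx z hz v.1 hv
          have h1 : 2 ≤ (UC G v.1).ncard := by
            rw [← hk]
            exact Set.ncard_le_ncard hsub (Set.toFinite _)
          have h2 := hUCiso v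
          have h3 := UC_decomp H (π v).1
          rw [hUnivH] at h3
          have hdiff : ({w} : Set (Fin n)) \ {(π v).1} = {w} := by
            ext z
            constructor
            · rintro ⟨hz1, _⟩; exact hz1
            · intro hz1
              refine ⟨hz1, ?_⟩
              simp only [Set.mem_singleton_iff] at hz1 ⊢
              intro hz2
              exact (π v).2 (hz2 ▸ hz1 ▸ rfl : (π v).1 = w)
          rw [hdiff, Set.ncard_singleton] at h3
          rw [← Set.ncard_pos (Set.toFinite _)]
          omega
        have := hcount hMS
        omega

lemma caseNoUnivH (hn : 7 ≤ n) (G H : SimpleGraph (Fin n)) (u w : Fin n)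
    (π : {x : Fin n // x ≠ u} ≃ {y : Fin n // y ≠ w}) (hπ : ShareCardsVia G H u w π)
    (hu : IsUniv G u) (hnoH : ∀ z, ¬ IsUniv H z) : False := by
  classical
  haveI : Nonempty (Fin n) := ⟨u⟩
  have hcards : Fintype.card (Fin n) = n := Fintype.card_fin n
  have hcard_sub : ∀ v : Fin n, Fintype.card {p : Fin n // p ≠ v} = n - 1 := by
    intro v; rw [card_fintype_ne, hcards]
  have hUnivH : univSet H = ∅ := by
    ext z; simp only [Set.mem_empty_iff_false, iff_false]; exact hnoH z
  have hsymmNN : ∀ (K : SimpleGraph (Fin n)) (a b : Fin n),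
      a ∈ nonNbrs K b → b ∈ nonNbrs K a := by
    rintro K a b ⟨hab, hnadj⟩
    exact ⟨Ne.symm hab, fun h => hnadj h.symm⟩
  have hUCu_mem : ∀ v : Fin n, v ≠ u → u ∈ UC G v := by
    intro v hv
    refine ⟨Ne.symm hv, ?_⟩
    rintro q ⟨hq, hnadj⟩
    exact absurd (hu q hq) hnadj
  have hMSne : ∀ v : {p : Fin n // p ≠ u}, (MS H (π v).1).Nonempty := by
    intro v
    have h1 : 1 ≤ (UC G v.1).ncard := by
      rw [Nat.one_le_iff_ne_zero, Ne, Set.ncard_eq_zero (Set.toFinite _)]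
      intro hemp
      have := hUCu_mem v.1 v.2
      rw [hemp] at this
      exact this
    have h2 := UC_ncard_iso G H v.1 (π v).1 (hπ v).some
    have h3 := UC_decomp H (π v).1
    rw [hUnivH] at h3
    simp only [Set.empty_diff, Set.ncard_empty, zero_add] at h3
    rw [← Set.ncard_pos (Set.toFinite _)]
    omega
  have hMSne' : ∀ q : {p : Fin n // p ≠ w}, (MS H q.1).Nonempty := by
    intro q
    have := hMSne (π.symm q)
    rwa [Equiv.apply_symm_apply] at this
  set F : {p : Fin n // p ≠ w} → Fin n := fun q => Classical.epsilon (· ∈ MS H q.1) with hF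
  have hFspec : ∀ q : {p : Fin n // p ≠ w}, nonNbrs H (F q) = {q.1} := fun q =>
    Classical.epsilon_spec (p := (· ∈ MS H q.1)) (hMSne' q)
  have hFinj : Function.Injective F := by
    intro q1 q2 he
    have h1 := hFspec q1
    rw [he, hFspec q2] at h1
    exact (Subtype.ext (Set.singleton_eq_singleton_iff.1 h1)).symm
  set Z : Set (Fin n) := Set.range F with hZ
  have hZcard : Z.ncard = n - 1 := by
    rw [hZ, ← Set.image_univ, Set.ncard_image_of_injective _ hFinj, Set.ncard_univ]
    rw [Nat.card_eq_fintype_card, hcard_sub w]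
  set A : Set (Fin n) := {z : Fin n | ∃ q, nonNbrs H z = {q}} with hA
  have hZA : Z ⊆ A := by
    rintro z ⟨q, rfl⟩
    exact ⟨q.1, hFspec q⟩
  -- every vertex of H has at most one non-neighbor
  have hsub1 : ∀ p : Fin n, (nonNbrs H p).Subsingleton := by
    intro p
    by_contra hns
    rw [← Set.not_nontrivial_iff, not_not] at hns
    obtain ⟨q1, hq1, q2, hq2, hq12⟩ := hns
    have hpA : p ∉ A := by
      rintro ⟨q, hq⟩
      rw [hq] at hq1 hq2
      exact hq12 (hq1.trans hq2.symm)
    have hApc : A ⊆ {p}ᶜ := by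
      intro z hz
      simp only [Set.mem_compl_iff, Set.mem_singleton_iff]
      rintro rfl
      exact hpA hz
    have hpc_card : ({p}ᶜ : Set (Fin n)).ncard = n - 1 := by
      have h1 := Set.ncard_add_ncard_compl ({p} : Set (Fin n)) (Set.toFinite _) (Set.toFinite _)
      rw [Set.ncard_singleton] at h1
      rw [Nat.card_eq_fintype_card, hcards] at h1
      omega
    have hAcard : A.ncard ≤ n - 1 := by
      rw [← hpc_card]
      exact Set.ncard_le_ncard hApc (Set.toFinite _)
    have hZAeq : Z = A := by
      apply Set.eq_of_subset_of_ncard_le hZA (by omega) (Set.toFinite _)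
    have hq1Z : q1 ∈ Z := by
      rw [hZAeq]
      -- q1 ∈ A since A = {p}ᶜ? no: show directly: A has ncard ≥ n-1 so A = {p}ᶜ
      have hAeq : A = {p}ᶜ := by
        apply Set.eq_of_subset_of_ncard_le hApc _ (Set.toFinite _)
        rw [hpc_card, ← hZcard, hZAeq]
      rw [hAeq]
      simp only [Set.mem_compl_iff, Set.mem_singleton_iff]
      exact fun h => hq1.1 (h ▸ rfl)
    have hq2Z : q2 ∈ Z := by
      rw [hZAeq]
      have hAeq : A = {p}ᶜ := by
        apply Set.eq_of_subset_of_ncard_le hApc _ (Set.toFinite _)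
        rw [hpc_card, ← hZcard, hZAeq]
      rw [hAeq]
      simp only [Set.mem_compl_iff, Set.mem_singleton_iff]
      exact fun h => hq2.1 (h ▸ rfl)
    obtain ⟨q1', hq1'⟩ := hq1Z
    obtain ⟨q2', hq2'⟩ := hq2Z
    have hp1 : p ∈ nonNbrs H q1 := hsymmNN H q1 p hq1
    have hp2 : p ∈ nonNbrs H q2 := hsymmNN H q2 p hq2
    rw [← hq1', hFspec q1'] at hp1
    rw [← hq2', hFspec q2'] at hp2
    simp only [Set.mem_singleton_iff] at hp1 hp2
    have : q1' = q2' := Subtype.ext (hp1.symm.trans hp2)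
    rw [← hq1', ← hq2', this] at hq12
    exact hq12 rfl
  -- so every vertex has exactly one non-neighbor
  have hone : ∀ p : Fin n, ∃ g, nonNbrs H p = {g} := by
    intro p
    have hne : (nonNbrs H p).Nonempty := by
      rcases Set.eq_empty_or_nonempty (nonNbrs H p) with he | hne
      · exfalso
        apply hnoH p
        intro q hq
        by_contra hnadj
        have : q ∈ nonNbrs H p := ⟨hq, hnadj⟩
        rw [he] at this
        exact this
      · exact hne
    obtain ⟨g, hg⟩ := hne
    exact ⟨g, Set.eq_singleton_iff_unique_mem.2 ⟨hg, fun q hq => hsub1 p hq hg⟩⟩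
  have hdegH : ∀ z : Fin n, deg H z = n - 2 := by
    intro z
    obtain ⟨g, hg⟩ := hone z
    have h1 := deg_add_nonNbrs H z
    rw [hg, Set.ncard_singleton, hcards] at h1
    omega
  -- |MS H q| = 1 for every q
  have hMS1 : ∀ q : {p : Fin n // p ≠ w}, (MS H q.1).ncard = 1 := by
    intro q
    rw [Set.ncard_eq_one]
    refine ⟨F q, ?_⟩
    apply Set.eq_singleton_iff_unique_mem.2
    refine ⟨hFspec q, ?_⟩
    intro z hz
    have hzq : nonNbrs H z = {q.1} := hz
    have h1 : z ∈ nonNbrs H q.1 := hsymmNN H q.1 z (by rw [hzq]; rfl)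
    have h2 : F q ∈ nonNbrs H q.1 := hsymmNN H q.1 (F q) (by rw [hFspec q]; rfl)
    exact hsub1 q.1 h1 h2
  -- UC G v = {u} for all v ≠ u
  have hUCu : ∀ v : {p : Fin n // p ≠ u}, UC G v.1 = {u} := by
    intro v
    have h2 := UC_ncard_iso G H v.1 (π v).1 (hπ v).some
    have h3 := UC_decomp H (π v).1
    rw [hUnivH] at h3
    simp only [Set.empty_diff, Set.ncard_empty, zero_add] at h3
    rw [hMS1 (π v)] at h3
    rw [h3] at h2
    obtain ⟨a, ha⟩ := Set.ncard_eq_one.1 h2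
    have hm := hUCu_mem v.1 v.2
    rw [ha] at hm ⊢
    simp only [Set.mem_singleton_iff] at hm
    rw [hm]
  -- every z ≠ u has at least two non-neighbors in G
  have h2nn : ∀ z : Fin n, z ≠ u → (nonNbrs G z).Nontrivial := by
    intro z hz
    have hne : (nonNbrs G z).Nonempty := by
      rcases Set.eq_empty_or_nonempty (nonNbrs G z) with he | hne
      · exfalso
        have hzuniv : IsUniv G z := by
          intro q hq
          by_contra hnadj
          have : q ∈ nonNbrs G z := ⟨hq, hnadj⟩
          rw [he] at this
          exact this
        -- pick v ∉ {z, u}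
        have hvex : ∃ v : Fin n, v ≠ z ∧ v ≠ u := by
          by_contra hno
          push_neg at hno
          have hsub : (Finset.univ : Finset (Fin n)) ⊆ {z, u} := by
            intro v _
            rcases eq_or_ne v z with rfl | hv
            · exact Finset.mem_insert_self _ _
            · rw [hno v hv]
              exact Finset.mem_insert_of_mem (Finset.mem_singleton_self u)
          have h1 := Finset.card_le_card hsub
          rw [Finset.card_univ, hcards] at h1
          have h2 : ({z, u} : Finset (Fin n)).card ≤ 2 :=
            le_trans (Finset.card_insert_le _ _) (by rw [Finset.card_singleton])
          omega
        obtain ⟨v, hvz, hvu⟩ := hvex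
        have : z ∈ UC G v := by
          refine ⟨Ne.symm hvz, ?_⟩
          rintro q hq
          rw [he] at hq
          exact hq.elim
        rw [hUCu ⟨v, hvu⟩] at this
        exact hz this
      · exact hne
    obtain ⟨q1, hq1⟩ := hne
    have hq1u : q1 ≠ u := by
      rintro rfl
      exact hq1.2 (hu z hz).symm
    rcases Set.eq_empty_or_nonempty (nonNbrs G z \ {q1}) with he | ⟨q2, hq2, hq2ne⟩
    · exfalso
      have hsingle : nonNbrs G z = {q1} := by
        apply Set.eq_singleton_iff_unique_mem.2
        refine ⟨hq1, fun q hq => ?_⟩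
        by_contra hne'
        have : q ∈ nonNbrs G z \ {q1} := ⟨hq, hne'⟩
        rw [he] at this
        exact this
      have : z ∈ UC G q1 := ⟨Ne.symm hq1.1, by rw [hsingle]⟩
      rw [hUCu ⟨q1, hq1u⟩] at this
      exact hz this
    · exact ⟨q1, hq1, q2, hq2, fun h => hq2ne (by rw [h]; rfl)⟩
  -- card degrees in H-cards are n-3 or n-2
  have hHdeg : ∀ (Q : Fin n) (q' : {p : Fin n // p ≠ Q}),
      deg (gcard H Q) q' = n-3 ∨ deg (gcard H Q) q' = n-2 := by
    intro Q q'
    have h := cardDeg_eq H Q q'.1 q'.2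
    have hdq := hdegH q'.1
    rw [deg] at hdq
    by_cases hQ : Q ∈ H.neighborSet q'.1
    · left
      rw [show (⟨q'.1, q'.2⟩ : {p : Fin n // p ≠ Q}) = q' from rfl] at h
      rw [h, Set.ncard_diff_singleton_of_mem hQ, hdq]
      omega
    · right
      rw [show (⟨q'.1, q'.2⟩ : {p : Fin n // p ≠ Q}) = q' from rfl] at h
      rw [h, Set.diff_singleton_eq_self hQ, hdq]
  -- now derive the contradiction
  obtain ⟨z, hz⟩ : ∃ z : Fin n, z ≠ u := by
    have h2 : 1 < Fintype.card (Fin n) := by rw [hcards]; omega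
    exact Fintype.exists_ne_of_one_lt_card h2 u
  obtain ⟨q1, hq1, q2, hq2, hq12⟩ := h2nn z hz
  have hq1u : q1 ≠ u := by
    rintro rfl
    exact hq1.2 (hu z hz).symm
  have hzq1 : z ≠ q1 := Ne.symm hq1.1
  -- degree of z in the card G - q1 equals deg G z
  have hdz1 : deg (gcard G q1) ⟨z, hzq1⟩ = deg G z := by
    have hq1nb : q1 ∉ G.neighborSet z := fun h => hq1.2 h
    rw [cardDeg_eq G q1 z hzq1, Set.diff_singleton_eq_self hq1nb, deg]
  -- transport to H-card
  have htrans : ∀ (v1 : Fin n) (hv1u : v1 ≠ u) (hzv1 : z ≠ v1),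
      deg (gcard G v1) ⟨z, hzv1⟩ = n-3 ∨ deg (gcard G v1) ⟨z, hzv1⟩ = n-2 := by
    intro v1 hv1u hzv1
    have e := (hπ ⟨v1, hv1u⟩).some
    have hiso := deg_iso (gcard G v1) (gcard H (π ⟨v1, hv1u⟩).1) e ⟨z, hzv1⟩
    rw [← hiso]
    exact hHdeg (π ⟨v1, hv1u⟩).1 (e ⟨z, hzv1⟩)
  have hdegz : deg G z = n - 3 := by
    rcases htrans q1 hq1u hzq1 with h | h
    · rw [hdz1] at h; exact h
    · rw [hdz1] at h
      exfalso
      have h1 := deg_add_nonNbrs G z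
      rw [hcards, h] at h1
      have h2 : (nonNbrs G z).ncard = 1 := by omega
      have h3 : 1 < (nonNbrs G z).ncard :=
        (Set.one_lt_ncard (Set.toFinite _)).2 ⟨q1, hq1, q2, hq2, fun hh =>
          hq12 hh⟩
      omega
  -- pick a neighbor v1 ≠ u of z
  have hnbne : (G.neighborSet z \ {u}).Nonempty := by
    rw [← Set.ncard_pos (Set.toFinite _)]
    have h1 := Set.ncard_le_ncard_diff_add_ncard (G.neighborSet z) {u} (Set.toFinite _)
    rw [Set.ncard_singleton] at h1
    have h2 : (G.neighborSet z).ncard = n - 3 := hdegz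
    omega
  obtain ⟨v1, hv1nb, hv1u⟩ := hnbne
  simp only [Set.mem_singleton_iff] at hv1u
  have hzv1 : z ≠ v1 := G.ne_of_adj hv1nb
  have hdzv1 : deg (gcard G v1) ⟨z, hzv1⟩ = n - 4 := by
    rw [cardDeg_eq G v1 z hzv1, Set.ncard_diff_singleton_of_mem hv1nb]
    rw [show (G.neighborSet z).ncard = n - 3 from hdegz]
    omega
  rcases htrans v1 hv1u hzv1 with h | h <;> rw [hdzv1] at h <;> omega

end Main

theorem clique_count_of_maxDeg_eq_n_sub_one {n : ℕ} (hn : 7 ≤ n)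
    (G H : SimpleGraph (Fin n)) (hshare : ShareCards G H)
    (hDelta : maxDeg G = n - 1) :
    ∀ r : ℕ, 1 ≤ r → r ≤ n - 1 → kappa G r = kappa H r := by
  classical
  obtain ⟨u, w, π, hπ⟩ := hshare
  have hcards : Fintype.card (Fin n) = n := Fintype.card_fin n
  have hex : ∃ x : Fin n, deg G x = n - 1 := by
    have hne : (Finset.univ : Finset (Fin n)).Nonempty := ⟨u, Finset.mem_univ u⟩
    obtain ⟨b, _, hb⟩ := Finset.exists_mem_eq_sup Finset.univ hne (fun v => deg G v)
    exact ⟨b, by rw [← hb]; exact hDelta⟩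
  by_cases hxu : ∃ x : Fin n, x ≠ u ∧ IsUniv G x
  · obtain ⟨x, hxu, hx⟩ := hxu
    exact mainLemma hn G H u w π hπ x hxu hx
  · have hu : IsUniv G u := by
      obtain ⟨x, hx⟩ := hex
      have hxuniv : IsUniv G x := (isUniv_iff_deg G x).2 (by rw [hcards]; exact hx)
      rcases eq_or_ne x u with rfl | hne
      · exact hxuniv
      · exact absurd ⟨x, hne, hxuniv⟩ hxu
    by_cases hzw : ∃ z : Fin n, z ≠ w ∧ IsUniv H z
    · obtain ⟨z, hzw, hz⟩ := hzw
      have hπ' := shareSymm G H u w π hπ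
      intro r h1 h2
      exact (mainLemma hn H G w u π.symm hπ' z hzw hz r h1 h2).symm
    · by_cases hw : IsUniv H w
      · intro r _ h2
        exact caseBoth hn G H u w π hπ hu hw r h2
      · exfalso
        apply caseNoUnivH hn G H u w π hπ hu
        intro z hz
        rcases eq_or_ne z w with rfl | hne
        · exact hw hz
        · exact hzw ⟨z, hne, hz⟩
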